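/- Let a₁, ..., a_n be real numbers with |a_i| ≤ α for all i. Choose a uniformly random subset S of {1,...,n} of size s (without replacement) and let Y = Σ_{i∈S} a_i. Then for every t ≥ 0, P(|Y − E[Y]| ≥ t) ≤ 2 exp(−t² / (2 s α²)). -/

import Mathlib

open Real

/-- Core calculus lemma behind Hoeffding's lemma. -/
lemma lemA (p : ℝ) (hp0 : 0 ≤ p) (hp1 : p ≤ 1) (h : ℝ) :
    (1 - p) * Real.exp (-p * h) + p * Real.exp ((1 - p) * h) ≤ Real.exp (h ^ 2 / 8) := by
  rcases eq_or_lt_of_le hp0 with rfl | hp0'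
  · simpa using Real.one_le_exp (by positivity)
  rcases eq_or_lt_of_le hp1 with rfl | hp1'
  · simpa using Real.one_le_exp (by positivity)
  set q : ℝ := 1 - p with hq
  have hq0 : 0 < q := by simp [hq]; linarith
  clear_value q
  -- D x = q + p * exp x > 0
  have hD : ∀ x : ℝ, 0 < q + p * Real.exp x := fun x => by positivity
  -- f x = -p*x + log (q + p * exp x)
  set f : ℝ → ℝ := fun x => -p * x + Real.log (q + p * Real.exp x) with hf
  -- derivative of f
  have hf' : ∀ x : ℝ, HasDerivAt f (-p + p * Real.exp x / (q + p * Real.exp x)) x := by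
    intro x
    have h1 : HasDerivAt (fun x : ℝ => q + p * Real.exp x) (p * Real.exp x) x := by
      simpa using ((Real.hasDerivAt_exp x).const_mul p).const_add q
    have h2 := h1.log (hD x).ne'
    convert ((hasDerivAt_id x).const_mul (-p)).add h2 using 1
    · rfl
    · rfl
    · rfl
    · ring
  -- g is derivative of G := x^2/8 - f
  set g : ℝ → ℝ := fun x => x / 4 + p - p * Real.exp x / (q + p * Real.exp x) with hg
  have hg' : ∀ x : ℝ, HasDerivAt g
      (1 / 4 - p * q * Real.exp x / (q + p * Real.exp x) ^ 2) x := by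
    intro x
    have h1 : HasDerivAt (fun x : ℝ => q + p * Real.exp x) (p * Real.exp x) x := by
      simpa using ((Real.hasDerivAt_exp x).const_mul p).const_add q
    have h2 : HasDerivAt (fun x : ℝ => p * Real.exp x) (p * Real.exp x) x :=
      (Real.hasDerivAt_exp x).const_mul p
    have h3 := h2.div h1 (hD x).ne'
    have h4 : HasDerivAt (fun x : ℝ => x / 4 + p) (1 / 4) x := by
      simpa using ((hasDerivAt_id x).div_const 4).add_const p
    have := h4.sub h3
    convert this using 1
    · rfl
    · rfl
    · rfl
    have := (hD x).ne'
    ring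
  have hgderiv : ∀ x : ℝ, 0 ≤ 1 / 4 - p * q * Real.exp x / (q + p * Real.exp x) ^ 2 := by
    intro x
    have hkey : 4 * (p * q * Real.exp x) ≤ (q + p * Real.exp x) ^ 2 := by
      nlinarith [sq_nonneg (q - p * Real.exp x), Real.exp_pos x]
    rw [sub_nonneg, div_le_iff₀ (by positivity)]
    nlinarith [hkey]
  have hgmono : Monotone g := by
    apply monotone_of_deriv_nonneg
    · exact fun x => (hg' x).differentiableAt
    · intro x
      rw [(hg' x).deriv]
      exact hgderiv x
  have hg0 : g 0 = 0 := by
    simp only [hg]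
    rw [Real.exp_zero]
    have : q + p * 1 = 1 := by simp [hq]
    rw [this]
    ring
  -- G := x^2/8 - f x
  set G : ℝ → ℝ := fun x => x ^ 2 / 8 - f x with hG
  have hG' : ∀ x : ℝ, HasDerivAt G (g x) x := by
    intro x
    have h1 : HasDerivAt (fun x : ℝ => x ^ 2 / 8) (2 * x ^ 1 / 8) x :=
      (hasDerivAt_pow 2 x).div_const 8
    have := h1.sub (hf' x)
    convert this using 1
    · rfl
    · rfl
    · rfl
    simp only [hg, pow_one]
    ring
  have hG0 : G 0 = 0 := by
    have h1 : q + p * Real.exp 0 = 1 := by rw [Real.exp_zero]; rw [hq]; ring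
    simp only [hG, hf]
    rw [h1, Real.log_one]
    ring
  have hGnonneg : ∀ x : ℝ, 0 ≤ G x := by
    intro x
    rcases le_or_gt 0 x with hx | hx
    · have hmono : MonotoneOn G (Set.Ici (0:ℝ)) := by
        apply monotoneOn_of_deriv_nonneg (convex_Ici 0)
        · exact Continuous.continuousOn (continuous_iff_continuousAt.mpr
            (fun y => (hG' y).differentiableAt.continuousAt))
        · intro y hy
          exact ((hG' y).differentiableAt).differentiableWithinAt
        · intro y hy
          rw [(hG' y).deriv]
          have : (0:ℝ) ≤ y := le_of_lt (by simpa using hy)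
          calc (0:ℝ) = g 0 := hg0.symm
          _ ≤ g y := hgmono this
      have := hmono (Set.self_mem_Ici) (Set.mem_Ici.mpr hx) hx
      rwa [hG0] at this
    · have hmono : AntitoneOn G (Set.Iic (0:ℝ)) := by
        apply antitoneOn_of_deriv_nonpos (convex_Iic 0)
        · exact Continuous.continuousOn (continuous_iff_continuousAt.mpr
            (fun y => (hG' y).differentiableAt.continuousAt))
        · intro y hy
          exact ((hG' y).differentiableAt).differentiableWithinAt
        · intro y hy
          rw [(hG' y).deriv]
          have hy0 : y ≤ (0:ℝ) := le_of_lt (by simpa using hy)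
          calc g y ≤ g 0 := hgmono hy0
          _ = 0 := hg0
      have := hmono (Set.mem_Iic.mpr hx.le) (Set.self_mem_Iic) hx.le
      rwa [hG0] at this
  -- conclude
  have hfh : f h ≤ h ^ 2 / 8 := by have := hGnonneg h; simp [hG] at this; linarith
  have hexp : (1 - p) * Real.exp (-p * h) + p * Real.exp ((1 - p) * h) = Real.exp (f h) := by
    simp only [hf]
    rw [Real.exp_add, Real.exp_log (hD h), hq]
    rw [show (1 - p) * h = h + -p * h by ring, Real.exp_add]
    ring
  rw [hq, hexp]
  exact Real.exp_le_exp.mpr hfh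

/-- Finite Hoeffding lemma: sum of `exp (l * a i)` over a nonempty finite set. -/
lemma lemB {ι : Type*} (A : Finset ι) (hA : A.Nonempty) (a : ι → ℝ) (α l : ℝ)
    (hα : ∀ i ∈ A, |a i| ≤ α) :
    ∑ i ∈ A, Real.exp (l * a i) ≤
      (A.card : ℝ) * Real.exp (l * ((∑ i ∈ A, a i) / A.card) + l ^ 2 * α ^ 2 / 2) := by
  have hcard : (0:ℝ) < A.card := by exact_mod_cast Finset.card_pos.mpr hA
  set μ : ℝ := (∑ i ∈ A, a i) / A.card with hμ
  obtain ⟨i₀, hi₀⟩ := hA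
  have hα0 : 0 ≤ α := le_trans (abs_nonneg _) (hα i₀ hi₀)
  rcases eq_or_lt_of_le hα0 with rfl | hαpos
  · -- α = 0 : all a i = 0
    have ha0 : ∀ i ∈ A, a i = 0 := fun i hi => abs_nonpos_iff.mp (hα i hi)
    have h1 : ∑ i ∈ A, Real.exp (l * a i) = (A.card : ℝ) := by
      rw [Finset.sum_congr rfl (fun i hi => by rw [ha0 i hi, mul_zero, Real.exp_zero])]
      simp
    have h2 : μ = 0 := by
      rw [hμ, Finset.sum_congr rfl ha0]
      simp
    rw [h1, h2]
    have h3 : (0:ℝ) ≤ l * 0 + l ^ 2 * 0 ^ 2 / 2 := by norm_num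
    nlinarith [Real.one_le_exp h3, hcard]
  · -- α > 0
    have hμa : |μ| ≤ α := by
      rw [hμ, abs_div, abs_of_pos hcard, div_le_iff₀ hcard]
      calc |∑ i ∈ A, a i| ≤ ∑ i ∈ A, |a i| := Finset.abs_sum_le_sum_abs _ _
        _ ≤ ∑ _i ∈ A, α := Finset.sum_le_sum hα
        _ = α * A.card := by rw [Finset.sum_const, nsmul_eq_mul]; ring
    set m : ℝ := -α - μ with hm
    set M : ℝ := α - μ with hM
    have habs := abs_le.mp hμa
    have hmM : M - m = 2 * α := by rw [hM, hm]; ring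
    have hm0 : m ≤ 0 := by rw [hm]; linarith [habs.2]
    have hM0 : 0 ≤ M := by rw [hM]; linarith [habs.2]
    have hmMpos : (0:ℝ) < M - m := by rw [hmM]; linarith
    set p : ℝ := -m / (M - m) with hp
    have hp0 : 0 ≤ p := by rw [hp]; apply div_nonneg (by linarith) (le_of_lt hmMpos)
    have hp1 : p ≤ 1 := by rw [hp, div_le_one hmMpos]; linarith
    set h : ℝ := l * (M - m) with hh
    -- chord bound for each element
    have chord : ∀ i ∈ A, Real.exp (l * (a i - μ)) ≤
        ((M - (a i - μ)) * Real.exp (l * m) + ((a i - μ) - m) * Real.exp (l * M)) / (M - m) := by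
      intro i hi
      have hai := abs_le.mp (hα i hi)
      have hz1 : m ≤ a i - μ := by rw [hm]; linarith [hai.1]
      have hz2 : a i - μ ≤ M := by rw [hM]; linarith [hai.2]
      set z : ℝ := a i - μ with hz
      have hu : (0:ℝ) ≤ (M - z) / (M - m) := div_nonneg (by linarith) (le_of_lt hmMpos)
      have hv : (0:ℝ) ≤ (z - m) / (M - m) := div_nonneg (by linarith) (le_of_lt hmMpos)
      have huv : (M - z) / (M - m) + (z - m) / (M - m) = 1 := by
        field_simp
        ring
      have key := convexOn_exp.2 (Set.mem_univ (l * m)) (Set.mem_univ (l * M)) hu hv huv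
      simp only [smul_eq_mul] at key
      have harg : (M - z) / (M - m) * (l * m) + (z - m) / (M - m) * (l * M) = l * z := by
        field_simp
        ring
      rw [harg] at key
      calc Real.exp (l * z) ≤ (M - z) / (M - m) * Real.exp (l * m)
            + (z - m) / (M - m) * Real.exp (l * M) := key
        _ = ((M - z) * Real.exp (l * m) + (z - m) * Real.exp (l * M)) / (M - m) := by ring
    -- sum the chord bounds
    have hsumz : ∑ i ∈ A, (a i - μ) = 0 := by
      rw [Finset.sum_sub_distrib, Finset.sum_const, nsmul_eq_mul, hμ]
      field_simp
      ring
    have step : ∀ i ∈ A, ((M - (a i - μ)) * Real.exp (l * m)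
        + ((a i - μ) - m) * Real.exp (l * M)) / (M - m)
        = (M * Real.exp (l * m) - m * Real.exp (l * M)) / (M - m)
          + (a i - μ) * ((Real.exp (l * M) - Real.exp (l * m)) / (M - m)) := fun i _ => by
      field_simp
      ring
    have e1 : -p * h = l * m := by rw [hp, hh]; field_simp
    have e2 : (1 - p) * h = l * M := by rw [hp, hh]; field_simp; ring
    have hsum : ∑ i ∈ A, Real.exp (l * (a i - μ)) ≤
        (A.card : ℝ) * ((1 - p) * Real.exp (-p * h) + p * Real.exp ((1 - p) * h)) := by
      calc ∑ i ∈ A, Real.exp (l * (a i - μ))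
          ≤ ∑ i ∈ A, ((M - (a i - μ)) * Real.exp (l * m)
            + ((a i - μ) - m) * Real.exp (l * M)) / (M - m) := Finset.sum_le_sum chord
        _ = (A.card : ℝ) * ((M * Real.exp (l * m) - m * Real.exp (l * M)) / (M - m)) := by
            rw [Finset.sum_congr rfl step, Finset.sum_add_distrib, Finset.sum_const,
              ← Finset.sum_mul, hsumz, zero_mul, add_zero, nsmul_eq_mul]
        _ = (A.card : ℝ) * ((1 - p) * Real.exp (-p * h) + p * Real.exp ((1 - p) * h)) := by
            congr 1
            rw [← e1, ← e2, hp]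
            field_simp
            ring
    have hlemA := lemA p hp0 hp1 h
    have hh2 : h ^ 2 / 8 = l ^ 2 * α ^ 2 / 2 := by rw [hh, hmM]; ring
    -- recombine
    have hfinal : ∑ i ∈ A, Real.exp (l * a i)
        = Real.exp (l * μ) * ∑ i ∈ A, Real.exp (l * (a i - μ)) := by
      rw [Finset.mul_sum]
      refine Finset.sum_congr rfl (fun i _ => ?_)
      rw [← Real.exp_add]
      congr 1
      ring
    rw [hfinal]
    calc Real.exp (l * μ) * ∑ i ∈ A, Real.exp (l * (a i - μ))
        ≤ Real.exp (l * μ) * ((A.card : ℝ) * Real.exp (h ^ 2 / 8)) := by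
          apply mul_le_mul_of_nonneg_left _ (le_of_lt (Real.exp_pos _))
          exact le_trans hsum (mul_le_mul_of_nonneg_left hlemA (le_of_lt hcard))
      _ = (A.card : ℝ) * Real.exp (l * μ + l ^ 2 * α ^ 2 / 2) := by
          rw [hh2, Real.exp_add]
          ring


/-- Double counting: pairs (S, x) with x ∈ S, |S| = s+1 correspond to pairs (T, x)
with |T| = s, x ∈ A \ T. -/
lemma count_id {ι : Type*} [DecidableEq ι] (A : Finset ι) (s : ℕ) (F : Finset ι → ℝ) :
    ((s : ℝ) + 1) * ∑ S ∈ A.powersetCard (s + 1), F S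
      = ∑ T ∈ A.powersetCard s, ∑ x ∈ A \ T, F (insert x T) := by
  have lhs : ((s : ℝ) + 1) * ∑ S ∈ A.powersetCard (s + 1), F S
      = ∑ S ∈ A.powersetCard (s + 1), ∑ x ∈ S, F S := by
    rw [Finset.mul_sum]
    refine Finset.sum_congr rfl (fun S hS => ?_)
    have hcard : S.card = s + 1 := (Finset.mem_powersetCard.mp hS).2
    rw [Finset.sum_const, nsmul_eq_mul, hcard]
    push_cast
    ring
  rw [lhs]
  rw [Finset.sum_sigma', Finset.sum_sigma']
  apply Finset.sum_nbij' (i := fun ⟨S, x⟩ => (⟨S.erase x, x⟩ : Σ _ : Finset ι, ι))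
    (j := fun ⟨T, x⟩ => (⟨insert x T, x⟩ : Σ _ : Finset ι, ι))
  · rintro ⟨S, x⟩ hSx
    simp only [Finset.mem_sigma, Finset.mem_powersetCard] at hSx ⊢
    obtain ⟨⟨hSA, hScard⟩, hxS⟩ := hSx
    refine ⟨⟨Finset.Subset.trans (Finset.erase_subset _ _) hSA, ?_⟩, ?_⟩
    · rw [Finset.card_erase_of_mem hxS, hScard]
      omega
    · rw [Finset.mem_sdiff]
      exact ⟨hSA hxS, Finset.notMem_erase _ _⟩
  · rintro ⟨T, x⟩ hTx
    simp only [Finset.mem_sigma, Finset.mem_powersetCard, Finset.mem_sdiff] at hTx ⊢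
    obtain ⟨⟨hTA, hTcard⟩, hxA, hxT⟩ := hTx
    refine ⟨⟨?_, ?_⟩, Finset.mem_insert_self _ _⟩
    · exact Finset.insert_subset hxA hTA
    · rw [Finset.card_insert_of_notMem hxT, hTcard]
  · rintro ⟨S, x⟩ hSx
    simp only [Finset.mem_sigma] at hSx
    simp [Finset.insert_erase hSx.2]
  · rintro ⟨T, x⟩ hTx
    simp only [Finset.mem_sigma, Finset.mem_sdiff] at hTx
    simp [Finset.erase_insert hTx.2.2]
  · rintro ⟨S, x⟩ hSx
    simp only [Finset.mem_sigma] at hSx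
    simp [Finset.insert_erase hSx.2]

/-- MGF bound for sampling without replacement. -/
lemma lemC {ι : Type*} [DecidableEq ι] (A : Finset ι) (a : ι → ℝ) (α : ℝ)
    (hα : ∀ i ∈ A, |a i| ≤ α) :
    ∀ s : ℕ, s ≤ A.card → ∀ l : ℝ,
    ∑ S ∈ A.powersetCard s, Real.exp (l * ∑ i ∈ S, a i)
      ≤ (A.card.choose s : ℝ) *
        Real.exp (l * ((s : ℝ) / A.card) * ∑ i ∈ A, a i + l ^ 2 * s * α ^ 2 / 2) := by
  intro s
  induction s with
  | zero =>
    intro _ l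
    simp [Finset.powersetCard_zero]
  | succ s ih =>
    intro hs1 l
    have hsle : s ≤ A.card := le_trans (Nat.le_succ s) hs1
    have hspos : (0:ℝ) < (s:ℝ) + 1 := by positivity
    have hcast : ((s:ℝ) + 1) ≤ (A.card : ℝ) := by exact_mod_cast hs1
    have hmpos : (0:ℝ) < (A.card : ℝ) := lt_of_lt_of_le hspos hcast
    set K : ℝ := (A.card : ℝ) - s with hKdef
    have hK1 : (1:ℝ) ≤ K := by rw [hKdef]; linarith
    have hKpos : (0:ℝ) < K := lt_of_lt_of_le one_pos hK1
    set l' : ℝ := l * (K - 1) / K with hl'def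
    set Sa : ℝ := ∑ i ∈ A, a i with hSa
    -- Step 1: double counting
    have step1 : ((s:ℝ) + 1) * ∑ S ∈ A.powersetCard (s + 1), Real.exp (l * ∑ i ∈ S, a i)
        = ∑ T ∈ A.powersetCard s,
            (Real.exp (l * ∑ i ∈ T, a i) * ∑ x ∈ A \ T, Real.exp (l * a x)) := by
      rw [count_id A s (fun S => Real.exp (l * ∑ i ∈ S, a i))]
      refine Finset.sum_congr rfl (fun T _ => ?_)
      rw [Finset.mul_sum]
      refine Finset.sum_congr rfl (fun x hx => ?_)
      have hxT : x ∉ T := (Finset.mem_sdiff.mp hx).2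
      rw [Finset.sum_insert hxT, ← Real.exp_add]
      congr 1
      ring
    -- Step 2: per-T bound using lemB
    have step2 : ∀ T ∈ A.powersetCard s,
        Real.exp (l * ∑ i ∈ T, a i) * ∑ x ∈ A \ T, Real.exp (l * a x)
        ≤ K * Real.exp (l * Sa / K + l ^ 2 * α ^ 2 / 2) * Real.exp (l' * ∑ i ∈ T, a i) := by
      intro T hT
      obtain ⟨hTA, hTcard⟩ := Finset.mem_powersetCard.mp hT
      have hcardAT : (A \ T).card = A.card - s := by
        rw [Finset.card_sdiff_of_subset hTA, hTcard]
      have hcardATR : ((A \ T).card : ℝ) = K := by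
        rw [hcardAT, hKdef, Nat.cast_sub hsle]
      have hATne : (A \ T).Nonempty := by
        rw [← Finset.card_pos, hcardAT]
        omega
      have hB := lemB (A \ T) hATne a α l (fun i hi => hα i (Finset.mem_sdiff.mp hi).1)
      have hsd : ∑ i ∈ A \ T, a i = Sa - ∑ i ∈ T, a i := by
        rw [Finset.sum_sdiff_eq_sub hTA, ← hSa]
      rw [hcardATR, hsd] at hB
      have hexp : l * ∑ i ∈ T, a i + (l * ((Sa - ∑ i ∈ T, a i) / K) + l ^ 2 * α ^ 2 / 2)
          = (l * Sa / K + l ^ 2 * α ^ 2 / 2) + l' * ∑ i ∈ T, a i := by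
        rw [hl'def]
        field_simp
        ring
      calc Real.exp (l * ∑ i ∈ T, a i) * ∑ x ∈ A \ T, Real.exp (l * a x)
          ≤ Real.exp (l * ∑ i ∈ T, a i)
            * (K * Real.exp (l * ((Sa - ∑ i ∈ T, a i) / K) + l ^ 2 * α ^ 2 / 2)) :=
            mul_le_mul_of_nonneg_left hB (le_of_lt (Real.exp_pos _))
        _ = K * Real.exp (l * ∑ i ∈ T, a i
              + (l * ((Sa - ∑ i ∈ T, a i) / K) + l ^ 2 * α ^ 2 / 2)) := by
            rw [Real.exp_add (l * ∑ i ∈ T, a i)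
              (l * ((Sa - ∑ i ∈ T, a i) / K) + l ^ 2 * α ^ 2 / 2)]
            ring
        _ = K * Real.exp ((l * Sa / K + l ^ 2 * α ^ 2 / 2) + l' * ∑ i ∈ T, a i) := by rw [hexp]
        _ = K * Real.exp (l * Sa / K + l ^ 2 * α ^ 2 / 2) * Real.exp (l' * ∑ i ∈ T, a i) := by
            rw [Real.exp_add (l * Sa / K + l ^ 2 * α ^ 2 / 2) (l' * ∑ i ∈ T, a i), ← mul_assoc]
    -- Step 3: sum over T and apply IH
    have step3 : ((s:ℝ) + 1) * ∑ S ∈ A.powersetCard (s + 1), Real.exp (l * ∑ i ∈ S, a i)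
        ≤ K * (A.card.choose s : ℝ)
          * Real.exp ((l * Sa / K + l ^ 2 * α ^ 2 / 2)
              + (l' * ((s : ℝ) / A.card) * Sa + l' ^ 2 * s * α ^ 2 / 2)) := by
      rw [step1]
      calc ∑ T ∈ A.powersetCard s,
            (Real.exp (l * ∑ i ∈ T, a i) * ∑ x ∈ A \ T, Real.exp (l * a x))
          ≤ ∑ T ∈ A.powersetCard s,
            K * Real.exp (l * Sa / K + l ^ 2 * α ^ 2 / 2) * Real.exp (l' * ∑ i ∈ T, a i) :=
            Finset.sum_le_sum step2
        _ = K * Real.exp (l * Sa / K + l ^ 2 * α ^ 2 / 2)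
            * ∑ T ∈ A.powersetCard s, Real.exp (l' * ∑ i ∈ T, a i) :=
            (Finset.mul_sum _ _ _).symm
        _ ≤ K * Real.exp (l * Sa / K + l ^ 2 * α ^ 2 / 2)
            * ((A.card.choose s : ℝ)
              * Real.exp (l' * ((s : ℝ) / A.card) * Sa + l' ^ 2 * s * α ^ 2 / 2)) := by
            apply mul_le_mul_of_nonneg_left (ih hsle l') (by positivity)
        _ = K * (A.card.choose s : ℝ)
            * Real.exp ((l * Sa / K + l ^ 2 * α ^ 2 / 2)
              + (l' * ((s : ℝ) / A.card) * Sa + l' ^ 2 * s * α ^ 2 / 2)) := by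
            rw [Real.exp_add (l * Sa / K + l ^ 2 * α ^ 2 / 2)
              (l' * ((s : ℝ) / A.card) * Sa + l' ^ 2 * (s : ℝ) * α ^ 2 / 2)]
            ring
    -- Step 4: simplify exponent and binomials
    have hmean : l * Sa / K + l' * ((s : ℝ) / A.card) * Sa
        = l * (((s:ℝ) + 1) / A.card) * Sa := by
      rw [hl'def, hKdef]
      have hK0 : (A.card:ℝ) - s ≠ 0 := by rw [← hKdef]; exact hKpos.ne'
      have hm0 : (A.card:ℝ) ≠ 0 := hmpos.ne'
      field_simp
      ring
    have hquad : l ^ 2 * α ^ 2 / 2 + l' ^ 2 * s * α ^ 2 / 2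
        ≤ l ^ 2 * ((s:ℝ) + 1) * α ^ 2 / 2 := by
      have hl2 : l' ^ 2 ≤ l ^ 2 := by
        rw [hl'def, div_pow, mul_pow, div_le_iff₀ (by positivity)]
        nlinarith [sq_nonneg l, hK1]
      have h3 : l' ^ 2 * ((s:ℝ) * α ^ 2) ≤ l ^ 2 * ((s:ℝ) * α ^ 2) :=
        mul_le_mul_of_nonneg_right hl2 (by positivity)
      nlinarith [h3]
    have hexpo : (l * Sa / K + l ^ 2 * α ^ 2 / 2)
          + (l' * ((s : ℝ) / A.card) * Sa + l' ^ 2 * s * α ^ 2 / 2)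
        ≤ l * (((s:ℝ) + 1) / A.card) * Sa + l ^ 2 * ((s:ℝ) + 1) * α ^ 2 / 2 := by
      have := hmean
      linarith [hquad]
    have hchoose : K * (A.card.choose s : ℝ) = ((s:ℝ) + 1) * (A.card.choose (s + 1) : ℝ) := by
      have h := Nat.choose_succ_right_eq A.card s
      have h2 := congrArg (fun k : ℕ => (k : ℝ)) h
      push_cast [Nat.cast_sub hsle] at h2
      rw [hKdef]
      linarith
    have final : ((s:ℝ) + 1) * ∑ S ∈ A.powersetCard (s + 1), Real.exp (l * ∑ i ∈ S, a i)
        ≤ ((s:ℝ) + 1) * ((A.card.choose (s + 1) : ℝ)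
          * Real.exp (l * (((s:ℝ) + 1) / A.card) * Sa + l ^ 2 * ((s:ℝ) + 1) * α ^ 2 / 2)) := by
      calc ((s:ℝ) + 1) * ∑ S ∈ A.powersetCard (s + 1), Real.exp (l * ∑ i ∈ S, a i)
          ≤ K * (A.card.choose s : ℝ)
            * Real.exp ((l * Sa / K + l ^ 2 * α ^ 2 / 2)
              + (l' * ((s : ℝ) / A.card) * Sa + l' ^ 2 * s * α ^ 2 / 2)) := step3
        _ ≤ K * (A.card.choose s : ℝ)
            * Real.exp (l * (((s:ℝ) + 1) / A.card) * Sa + l ^ 2 * ((s:ℝ) + 1) * α ^ 2 / 2) := by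
            apply mul_le_mul_of_nonneg_left (Real.exp_le_exp.mpr hexpo) (by positivity)
        _ = ((s:ℝ) + 1) * ((A.card.choose (s + 1) : ℝ)
            * Real.exp (l * (((s:ℝ) + 1) / A.card) * Sa
              + l ^ 2 * ((s:ℝ) + 1) * α ^ 2 / 2)) := by
            rw [hchoose]; ring
    have := (mul_le_mul_iff_right₀ hspos).mp final
    convert this using 3
    · rfl
    all_goals (push_cast <;> ring)

/-- One-sided Chernoff bound. -/
lemma sided (n s : ℕ) (hs : s ≤ n) (a : Fin n → ℝ) (α t : ℝ) (hα : ∀ i, |a i| ≤ α)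
    (hαpos : 0 < α) (hspos : 0 < s) (htpos : 0 < t) :
    (((Finset.powersetCard s (Finset.univ : Finset (Fin n))).filter
        (fun S => t ≤ (∑ i ∈ S, a i) - (s / n : ℝ) * ∑ i, a i)).card : ℝ)
      ≤ (n.choose s : ℝ) * Real.exp (-(t ^ 2) / (2 * s * α ^ 2)) := by
  have hsR : (0:ℝ) < (s:ℝ) := by exact_mod_cast hspos
  set l : ℝ := t / (s * α ^ 2) with hldef
  have hlpos : 0 < l := by rw [hldef]; positivity
  set E : ℝ := (s / n : ℝ) * ∑ i, a i with hE
  set P := Finset.powersetCard s (Finset.univ : Finset (Fin n)) with hP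
  have hC := lemC (Finset.univ : Finset (Fin n)) a α (fun i _ => hα i) s
    (by simpa using hs) l
  rw [Finset.card_univ, Fintype.card_fin] at hC
  have key : ∀ S ∈ P.filter (fun S => t ≤ (∑ i ∈ S, a i) - E),
      Real.exp (l * (E + t)) ≤ Real.exp (l * ∑ i ∈ S, a i) := by
    intro S hS
    have h1 := (Finset.mem_filter.mp hS).2
    exact Real.exp_le_exp.mpr (mul_le_mul_of_nonneg_left (by linarith) hlpos.le)
  have h1 : ((P.filter (fun S => t ≤ (∑ i ∈ S, a i) - E)).card : ℝ) * Real.exp (l * (E + t))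
      ≤ (n.choose s : ℝ) * Real.exp (l * ((s:ℝ) / n) * (∑ i, a i) + l ^ 2 * s * α ^ 2 / 2) := by
    calc ((P.filter (fun S => t ≤ (∑ i ∈ S, a i) - E)).card : ℝ) * Real.exp (l * (E + t))
        = ∑ _S ∈ P.filter (fun S => t ≤ (∑ i ∈ S, a i) - E), Real.exp (l * (E + t)) := by
          rw [Finset.sum_const, nsmul_eq_mul]
      _ ≤ ∑ S ∈ P.filter (fun S => t ≤ (∑ i ∈ S, a i) - E), Real.exp (l * ∑ i ∈ S, a i) :=
          Finset.sum_le_sum key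
      _ ≤ ∑ S ∈ P, Real.exp (l * ∑ i ∈ S, a i) :=
          Finset.sum_le_sum_of_subset_of_nonneg (Finset.filter_subset _ _)
            (fun _ _ _ => (Real.exp_pos _).le)
      _ ≤ (n.choose s : ℝ) * Real.exp (l * ((s:ℝ) / n) * (∑ i, a i) + l ^ 2 * s * α ^ 2 / 2) := hC
  have h2 : ((P.filter (fun S => t ≤ (∑ i ∈ S, a i) - E)).card : ℝ)
      ≤ (n.choose s : ℝ) * (Real.exp (l * ((s:ℝ) / n) * (∑ i, a i) + l ^ 2 * s * α ^ 2 / 2)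
        / Real.exp (l * (E + t))) := by
    rw [← mul_div_assoc, le_div_iff₀ (Real.exp_pos _)]
    exact h1
  have h3 : Real.exp (l * ((s:ℝ) / n) * (∑ i, a i) + l ^ 2 * s * α ^ 2 / 2)
      / Real.exp (l * (E + t)) = Real.exp (-(t ^ 2) / (2 * s * α ^ 2)) := by
    rw [← Real.exp_sub]
    congr 1
    rw [hE, hldef]
    have hα2 : α ^ 2 ≠ 0 := by positivity
    have hsne : (s:ℝ) ≠ 0 := hsR.ne'
    have hnpos : 0 < n := lt_of_lt_of_le hspos hs
    have hnne : (n:ℝ) ≠ 0 := by exact_mod_cast hnpos.ne'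
    field_simp
    ring
  rw [h3] at h2
  exact h2

/-- McDiarmid / sampling without replacement: For reals
`a_1, …, a_n` with `|a_i| ≤ α`, if `S` is a uniformly random `s`-element subset
of `[n]` and `Y = Σ_{i∈S} a_i` (with `E[Y] = (s/n) Σ_i a_i`), then for `t ≥ 0`,
`P(|Y − E[Y]| ≥ t) ≤ 2 exp(−t²/(2 s α²))`.  Here the probability is expressed
by counting `s`-element subsets. -/
theorem stmt17 (n s : ℕ) (hs : s ≤ n) (a : Fin n → ℝ) (α t : ℝ)
    (hα : ∀ i, |a i| ≤ α) (ht : 0 ≤ t) :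
    (((Finset.powersetCard s (Finset.univ : Finset (Fin n))).filter
        (fun S => t ≤ |(∑ i ∈ S, a i) - (s / n : ℝ) * ∑ i, a i|)).card : ℝ) /
      ((Finset.powersetCard s (Finset.univ : Finset (Fin n))).card : ℝ)
    ≤ 2 * Real.exp (-(t ^ 2) / (2 * s * α ^ 2)) := by
  set P := Finset.powersetCard s (Finset.univ : Finset (Fin n)) with hP
  have hPcard : (P.card : ℝ) = (n.choose s : ℝ) := by
    rw [hP, Finset.card_powersetCard, Finset.card_univ, Fintype.card_fin]
  have hCpos : (0:ℝ) < (n.choose s : ℝ) := by exact_mod_cast Nat.choose_pos hs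
  have hPpos : (0:ℝ) < (P.card : ℝ) := by rw [hPcard]; exact hCpos
  rcases eq_or_lt_of_le ht with rfl | htpos
  · -- t = 0
    have hfil : ((P.filter (fun S => (0:ℝ) ≤ |(∑ i ∈ S, a i) - (s / n : ℝ) * ∑ i, a i|)).card : ℝ)
        ≤ (P.card : ℝ) := by
      exact_mod_cast Finset.card_le_card (Finset.filter_subset _ _)
    have h1 : ((P.filter (fun S => (0:ℝ) ≤ |(∑ i ∈ S, a i) - (s / n : ℝ) * ∑ i, a i|)).card : ℝ)
        / (P.card : ℝ) ≤ 1 := (div_le_one hPpos).mpr hfil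
    have h2 : -((0:ℝ) ^ 2) / (2 * s * α ^ 2) = 0 := by norm_num
    rw [h2, Real.exp_zero]
    linarith
  rcases Nat.eq_zero_or_pos s with rfl | hspos
  · -- s = 0
    have hempty : P.filter (fun S => t ≤ |(∑ i ∈ S, a i) - ((0:ℕ) / n : ℝ) * ∑ i, a i|) = ∅ := by
      rw [Finset.filter_eq_empty_iff]
      intro S hS
      have hcard : S.card = 0 := (Finset.mem_powersetCard.mp hS).2
      have hSe : S = ∅ := Finset.card_eq_zero.mp hcard
      subst hSe
      simp only [Finset.sum_empty, Nat.cast_zero, zero_div, zero_mul, sub_zero, abs_zero]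
      exact not_le.mpr htpos
    rw [hempty]
    simp only [Finset.card_empty, Nat.cast_zero, zero_div]
    positivity
  -- s ≥ 1
  have hn : 0 < n := lt_of_lt_of_le hspos hs
  have hα0 : 0 ≤ α := le_trans (abs_nonneg _) (hα ⟨0, hn⟩)
  rcases eq_or_lt_of_le hα0 with rfl | hαpos
  · -- α = 0
    have ha0 : ∀ i, a i = 0 := fun i => abs_nonpos_iff.mp (hα i)
    have hempty : P.filter (fun S => t ≤ |(∑ i ∈ S, a i) - (s / n : ℝ) * ∑ i, a i|) = ∅ := by
      rw [Finset.filter_eq_empty_iff]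
      intro S _
      simp only [ha0, Finset.sum_const_zero, mul_zero, sub_zero, abs_zero]
      exact not_le.mpr htpos
    rw [hempty]
    simp only [Finset.card_empty, Nat.cast_zero, zero_div]
    positivity
  · -- main case
    set E : ℝ := (s / n : ℝ) * ∑ i, a i with hE
    have hsub : P.filter (fun S => t ≤ |(∑ i ∈ S, a i) - E|)
        ⊆ (P.filter (fun S => t ≤ (∑ i ∈ S, a i) - E))
          ∪ (P.filter (fun S => t ≤ (∑ i ∈ S, (fun j => -a j) i) - (s / n : ℝ) * ∑ i, (fun j => -a j) i)) := by
      intro S hS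
      obtain ⟨hSP, habs⟩ := Finset.mem_filter.mp hS
      rcases le_abs.mp habs with h | h
      · exact Finset.mem_union_left _ (Finset.mem_filter.mpr ⟨hSP, h⟩)
      · refine Finset.mem_union_right _ (Finset.mem_filter.mpr ⟨hSP, ?_⟩)
        simp only [Finset.sum_neg_distrib, mul_neg]
        rw [hE] at h
        linarith
    have hb1 := sided n s hs a α t hα hαpos hspos htpos
    have hb2 := sided n s hs (fun j => -a j) α t (fun i => by simpa using hα i) hαpos hspos htpos
    have hcards : ((P.filter (fun S => t ≤ |(∑ i ∈ S, a i) - E|)).card : ℝ)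
        ≤ ((P.filter (fun S => t ≤ (∑ i ∈ S, a i) - E)).card : ℝ)
          + ((P.filter (fun S => t ≤ (∑ i ∈ S, (fun j => -a j) i)
              - (s / n : ℝ) * ∑ i, (fun j => -a j) i)).card : ℝ) := by
      have h1 := Finset.card_le_card hsub
      have h2 := Finset.card_union_le
        (P.filter (fun S => t ≤ (∑ i ∈ S, a i) - E))
        (P.filter (fun S => t ≤ (∑ i ∈ S, (fun j => -a j) i)
          - (s / n : ℝ) * ∑ i, (fun j => -a j) i))
      exact_mod_cast le_trans h1 h2
    rw [div_le_iff₀ hPpos, hPcard]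
    calc ((P.filter (fun S => t ≤ |(∑ i ∈ S, a i) - E|)).card : ℝ)
        ≤ _ + _ := hcards
      _ ≤ (n.choose s : ℝ) * Real.exp (-(t ^ 2) / (2 * s * α ^ 2))
          + (n.choose s : ℝ) * Real.exp (-(t ^ 2) / (2 * s * α ^ 2)) := add_le_add hb1 hb2
      _ = 2 * Real.exp (-(t ^ 2) / (2 * s * α ^ 2)) * (n.choose s : ℝ) := by ring
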